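/- Consider the process that repeatedly removes from a finite uncertain directed graph any vertex v with P[d⁻_v ≥ k] · P[d⁺_v ≥ l] < η (updating degree distributions after each removal) until no such vertex remains. The resulting vertex set is independent of the order in which violating vertices are removed. -/

import Mathlib

open Finset

/-- Edges of the subgraph induced by the vertex set `C`. -/
def inducedEdges {V : Type*} [DecidableEq V] (E : Finset (V × V)) (C : Finset V) :
    Finset (V × V) :=
  E.filter (fun e => e.1 ∈ C ∧ e.2 ∈ C)

/-- `P[d⁻_v ≥ k]` in the subgraph induced by the remaining vertex set `C`, where
each edge `e` exists independently with probability `p e`. -/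
def inProb {V : Type*} [DecidableEq V] (E : Finset (V × V)) (p : V × V → ℝ)
    (C : Finset V) (k : ℕ) (v : V) : ℝ :=
  ∑ W ∈ (inducedEdges E C).powerset.filter
      (fun W => k ≤ (W.filter (fun e => e.2 = v)).card),
    (∏ e ∈ W, p e) * ∏ e ∈ inducedEdges E C \ W, (1 - p e)

/-- `P[d⁺_v ≥ l]` in the subgraph induced by the remaining vertex set `C`. -/
def outProb {V : Type*} [DecidableEq V] (E : Finset (V × V)) (p : V × V → ℝ)
    (C : Finset V) (l : ℕ) (v : V) : ℝ :=
  ∑ W ∈ (inducedEdges E C).powerset.filter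
      (fun W => l ≤ (W.filter (fun e => e.1 = v)).card),
    (∏ e ∈ W, p e) * ∏ e ∈ inducedEdges E C \ W, (1 - p e)

/-- `v` is a violating vertex of the current vertex set `C`. -/
def Violating {V : Type*} [DecidableEq V] (E : Finset (V × V)) (p : V × V → ℝ)
    (k l : ℕ) (η : ℝ) (C : Finset V) (v : V) : Prop :=
  v ∈ C ∧ inProb E p C k v * outProb E p C l v < η

/-- One peeling step: remove a violating vertex. -/
def PeelStep {V : Type*} [DecidableEq V] (E : Finset (V × V)) (p : V × V → ℝ)
    (k l : ℕ) (η : ℝ) (C C' : Finset V) : Prop :=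
  ∃ v, Violating E p k l η C v ∧ C' = C.erase v


section Aux
open scoped Classical

variable {V : Type*} [DecidableEq V]

noncomputable def probOf (p : V × V → ℝ) (F : Finset (V × V)) (Q : Finset (V × V) → Prop) : ℝ :=
  ∑ W ∈ F.powerset.filter Q, (∏ e ∈ W, p e) * ∏ e ∈ F \ W, (1 - p e)

lemma weight_nonneg {p : V × V → ℝ} (hp : ∀ e, 0 ≤ p e ∧ p e ≤ 1) (W F : Finset (V × V)) :
    0 ≤ (∏ e ∈ W, p e) * ∏ e ∈ F \ W, (1 - p e) :=
  mul_nonneg (Finset.prod_nonneg fun e _ => (hp e).1)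
    (Finset.prod_nonneg fun e _ => by linarith [(hp e).2])

lemma probOf_nonneg {p : V × V → ℝ} (hp : ∀ e, 0 ≤ p e ∧ p e ≤ 1) (F : Finset (V × V))
    (Q : Finset (V × V) → Prop) : 0 ≤ probOf p F Q :=
  Finset.sum_nonneg fun W _ => weight_nonneg hp W F

lemma probOf_mono_event {p : V × V → ℝ} (hp : ∀ e, 0 ≤ p e ∧ p e ≤ 1) (F : Finset (V × V))
    {Q R : Finset (V × V) → Prop} (h : ∀ W, Q W → R W) :
    probOf p F Q ≤ probOf p F R := by
  apply Finset.sum_le_sum_of_subset_of_nonneg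
  · intro W hW
    simp only [Finset.mem_filter] at *
    exact ⟨hW.1, h _ hW.2⟩
  · intro W _ _; exact weight_nonneg hp W F

lemma probOf_congr {p : V × V → ℝ} (F : Finset (V × V))
    {Q R : Finset (V × V) → Prop} (h : ∀ W ∈ F.powerset, (Q W ↔ R W)) :
    probOf p F Q = probOf p F R := by
  unfold probOf
  rw [Finset.filter_congr h]

lemma probOf_insert {p : V × V → ℝ} {a : V × V} {F : Finset (V × V)} (ha : a ∉ F)
    (Q : Finset (V × V) → Prop) :
    probOf p (insert a F) Q
      = p a * probOf p F (fun W => Q (insert a W)) + (1 - p a) * probOf p F Q := by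
  unfold probOf
  have hdisj : Disjoint (F.powerset.filter Q) ((F.powerset.image (insert a)).filter Q) := by
    rw [Finset.disjoint_left]
    intro x hx1 hx2
    simp only [Finset.mem_filter, Finset.mem_powerset, Finset.mem_image] at hx1 hx2
    obtain ⟨⟨W, hW, rfl⟩, -⟩ := hx2
    exact ha (hx1.1 (Finset.mem_insert_self a W))
  rw [Finset.powerset_insert, Finset.filter_union, Finset.sum_union hdisj]
  have himg : (F.powerset.image (insert a)).filter Q
      = (F.powerset.filter (fun W => Q (insert a W))).image (insert a) :=
    Finset.filter_image
  rw [himg, Finset.sum_image (by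
    intro W₁ h₁ W₂ h₂ h
    simp only [Finset.mem_coe, Finset.mem_filter, Finset.mem_powerset] at h₁ h₂
    have ha1 : a ∉ W₁ := fun hx => ha (h₁.1 hx)
    have ha2 : a ∉ W₂ := fun hx => ha (h₂.1 hx)
    rw [← Finset.erase_insert ha1, h, Finset.erase_insert ha2])]
  have key : ∀ W ∈ F.powerset.filter (fun W => Q (insert a W)),
      (∏ e ∈ insert a W, p e) * ∏ e ∈ insert a F \ insert a W, (1 - p e)
        = p a * ((∏ e ∈ W, p e) * ∏ e ∈ F \ W, (1 - p e)) := by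
    intro W hW
    simp only [Finset.mem_filter, Finset.mem_powerset] at hW
    have haW : a ∉ W := fun hx => ha (hW.1 hx)
    have hsd : insert a F \ insert a W = F \ W := by
      ext x
      simp only [Finset.mem_sdiff, Finset.mem_insert, not_or]
      constructor
      · rintro ⟨(rfl | hx), h2, h3⟩
        · exact absurd rfl h2
        · exact ⟨hx, h3⟩
      · rintro ⟨hx, h3⟩
        exact ⟨Or.inr hx, fun h => ha (h ▸ hx), h3⟩
    rw [Finset.prod_insert haW, hsd]
    ring
  rw [Finset.sum_congr rfl key]
  have key2 : ∀ W ∈ F.powerset.filter Q,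
      (∏ e ∈ W, p e) * ∏ e ∈ insert a F \ W, (1 - p e)
        = (1 - p a) * ((∏ e ∈ W, p e) * ∏ e ∈ F \ W, (1 - p e)) := by
    intro W hW
    simp only [Finset.mem_filter, Finset.mem_powerset] at hW
    have haW : a ∉ W := fun hx => ha (hW.1 hx)
    have hsd : insert a F \ W = insert a (F \ W) := by
      rw [Finset.insert_sdiff_of_notMem _ haW]
    have haFW : a ∉ F \ W := fun hx => ha (Finset.mem_sdiff.mp hx).1
    rw [hsd, Finset.prod_insert haFW]
    ring
  rw [Finset.sum_congr rfl key2, ← Finset.mul_sum, ← Finset.mul_sum]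
  ring

lemma probOf_restrict (p : V × V → ℝ) (F' : Finset (V × V)) (Q : Finset (V × V) → Prop)
    (hQ : ∀ W, Q W ↔ Q (W ∩ F')) :
    ∀ F : Finset (V × V), F' ⊆ F → probOf p F Q = probOf p F' Q := by
  intro F
  induction F using Finset.strongInduction with
  | _ F ih =>
    intro hsub
    by_cases h : F ⊆ F'
    · rw [Finset.Subset.antisymm h hsub]
    · obtain ⟨a, haF, haF'⟩ := Finset.not_subset.mp h
      have ha : a ∉ F.erase a := Finset.notMem_erase _ _
      have hF : F = insert a (F.erase a) := (Finset.insert_erase haF).symm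
      rw [hF, probOf_insert ha]
      have h1 : probOf p (F.erase a) (fun W => Q (insert a W)) = probOf p (F.erase a) Q := by
        apply probOf_congr
        intro W _
        rw [hQ (insert a W), Finset.insert_inter_of_notMem haF', ← hQ]
      have hsub' : F' ⊆ F.erase a := fun x hx =>
        Finset.mem_erase.mpr ⟨fun he => haF' (he ▸ hx), hsub hx⟩
      have h2 := ih (F.erase a) (Finset.erase_ssubset haF) hsub'
      rw [h1, h2]
      ring

end Aux

section Main
open scoped Classical
variable {V : Type*} [DecidableEq V]

lemma inducedEdges_mono (E : Finset (V × V)) {C' C : Finset V} (h : C' ⊆ C) :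
    inducedEdges E C' ⊆ inducedEdges E C := by
  intro e he
  simp only [inducedEdges, Finset.mem_filter] at *
  exact ⟨he.1, h he.2.1, h he.2.2⟩

lemma inProb_eq (E : Finset (V × V)) (p : V × V → ℝ) (C : Finset V) (k : ℕ) (v : V) :
    inProb E p C k v
      = probOf p (inducedEdges E C) (fun W => k ≤ (W.filter (fun e => e.2 = v)).card) := by
  unfold inProb probOf
  congr 1
  exact (Finset.filter_congr_decidable _ _ _).symm

lemma outProb_eq (E : Finset (V × V)) (p : V × V → ℝ) (C : Finset V) (l : ℕ) (v : V) :
    outProb E p C l v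
      = probOf p (inducedEdges E C) (fun W => l ≤ (W.filter (fun e => e.1 = v)).card) := by
  unfold outProb probOf
  congr 1
  exact (Finset.filter_congr_decidable _ _ _).symm

lemma inProb_nonneg (E : Finset (V × V)) {p : V × V → ℝ} (hp : ∀ e, 0 ≤ p e ∧ p e ≤ 1)
    (C : Finset V) (k : ℕ) (v : V) : 0 ≤ inProb E p C k v := by
  rw [inProb_eq]; exact probOf_nonneg hp _ _

lemma outProb_nonneg (E : Finset (V × V)) {p : V × V → ℝ} (hp : ∀ e, 0 ≤ p e ∧ p e ≤ 1)
    (C : Finset V) (l : ℕ) (v : V) : 0 ≤ outProb E p C l v := by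
  rw [outProb_eq]; exact probOf_nonneg hp _ _

lemma inProb_mono (E : Finset (V × V)) {p : V × V → ℝ} (hp : ∀ e, 0 ≤ p e ∧ p e ≤ 1)
    {C' C : Finset V} (h : C' ⊆ C) (k : ℕ) (v : V) :
    inProb E p C' k v ≤ inProb E p C k v := by
  set F' := inducedEdges E C' with hF'
  set F := inducedEdges E C with hF
  have hFF : F' ⊆ F := inducedEdges_mono E h
  have e1 : inProb E p C' k v
      = probOf p F' (fun W => k ≤ ((W ∩ F').filter (fun e => e.2 = v)).card) := by
    rw [inProb_eq]
    apply probOf_congr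
    intro W hW
    rw [Finset.inter_eq_left.mpr (Finset.mem_powerset.mp hW)]
  rw [e1, ← probOf_restrict p F' _ (fun W => by
    rw [Finset.inter_assoc, Finset.inter_self]) F hFF, inProb_eq]
  apply probOf_mono_event hp
  intro W hW
  exact le_trans hW (Finset.card_le_card (Finset.filter_subset_filter _ Finset.inter_subset_left))

lemma outProb_mono (E : Finset (V × V)) {p : V × V → ℝ} (hp : ∀ e, 0 ≤ p e ∧ p e ≤ 1)
    {C' C : Finset V} (h : C' ⊆ C) (l : ℕ) (v : V) :
    outProb E p C' l v ≤ outProb E p C l v := by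
  set F' := inducedEdges E C' with hF'
  set F := inducedEdges E C with hF
  have hFF : F' ⊆ F := inducedEdges_mono E h
  have e1 : outProb E p C' l v
      = probOf p F' (fun W => l ≤ ((W ∩ F').filter (fun e => e.1 = v)).card) := by
    rw [outProb_eq]
    apply probOf_congr
    intro W hW
    rw [Finset.inter_eq_left.mpr (Finset.mem_powerset.mp hW)]
  rw [e1, ← probOf_restrict p F' _ (fun W => by
    rw [Finset.inter_assoc, Finset.inter_self]) F hFF, outProb_eq]
  apply probOf_mono_event hp
  intro W hW
  exact le_trans hW (Finset.card_le_card (Finset.filter_subset_filter _ Finset.inter_subset_left))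

lemma violating_mono (E : Finset (V × V)) {p : V × V → ℝ} (hp : ∀ e, 0 ≤ p e ∧ p e ≤ 1)
    (k l : ℕ) (η : ℝ) {S C : Finset V} (hSC : S ⊆ C) {v : V}
    (hv : Violating E p k l η C v) (hvS : v ∈ S) : Violating E p k l η S v := by
  refine ⟨hvS, lt_of_le_of_lt ?_ hv.2⟩
  exact mul_le_mul (inProb_mono E hp hSC k v) (outProb_mono E hp hSC l v)
    (outProb_nonneg E hp S l v) (inProb_nonneg E hp C k v)

lemma stable_subset (E : Finset (V × V)) {p : V × V → ℝ} (hp : ∀ e, 0 ≤ p e ∧ p e ≤ 1)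
    (k l : ℕ) (η : ℝ) {S : Finset V} (hS : ∀ v, ¬ Violating E p k l η S v)
    {C D : Finset V} (h : Relation.ReflTransGen (PeelStep E p k l η) C D)
    (hSC : S ⊆ C) : S ⊆ D := by
  induction h with
  | refl => exact hSC
  | tail _ hstep ih =>
    obtain ⟨v, hv, rfl⟩ := hstep
    intro x hx
    rw [Finset.mem_erase]
    refine ⟨?_, ih hx⟩
    rintro rfl
    exact hS x (violating_mono E hp k l η ih hv hx)

lemma reach_subset (E : Finset (V × V)) (p : V × V → ℝ) (k l : ℕ) (η : ℝ)
    {C D : Finset V} (h : Relation.ReflTransGen (PeelStep E p k l η) C D) : D ⊆ C := by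
  induction h with
  | refl => exact Finset.Subset.refl _
  | tail _ hstep ih =>
    obtain ⟨v, _, rfl⟩ := hstep
    exact (Finset.erase_subset _ _).trans ih

private theorem stmt19aux {V : Type*} [DecidableEq V] (E : Finset (V × V)) (p : V × V → ℝ)
    (hp : ∀ e, 0 ≤ p e ∧ p e ≤ 1) (k l : ℕ) (η : ℝ)
    (C₀ C₁ C₂ : Finset V)
    (h₁ : Relation.ReflTransGen (PeelStep E p k l η) C₀ C₁)
    (h₂ : Relation.ReflTransGen (PeelStep E p k l η) C₀ C₂)
    (t₁ : ∀ v, ¬ Violating E p k l η C₁ v)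
    (t₂ : ∀ v, ¬ Violating E p k l η C₂ v) :
    C₁ = C₂ :=
  Finset.Subset.antisymm
    (stable_subset E hp k l η t₁ h₂ (reach_subset E p k l η h₁))
    (stable_subset E hp k l η t₂ h₁ (reach_subset E p k l η h₂))

end Main

theorem stmt19 {V : Type*} [DecidableEq V] (E : Finset (V × V)) (p : V × V → ℝ)
    (hp : ∀ e, 0 ≤ p e ∧ p e ≤ 1) (k l : ℕ) (η : ℝ)
    (C₀ C₁ C₂ : Finset V)
    (h₁ : Relation.ReflTransGen (PeelStep E p k l η) C₀ C₁)
    (h₂ : Relation.ReflTransGen (PeelStep E p k l η) C₀ C₂)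
    (t₁ : ∀ v, ¬ Violating E p k l η C₁ v)
    (t₂ : ∀ v, ¬ Violating E p k l η C₂ v) :
    C₁ = C₂ := by
  exact Finset.Subset.antisymm
    (stable_subset E hp k l η t₁ h₂ (reach_subset E p k l η h₁))
    (stable_subset E hp k l η t₂ h₁ (reach_subset E p k l η h₂))
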